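/- For every x = (x^{(1)}, x^{(2)}) ∈ ℝ^{N1} × ℝ^{N2}, |(L(F²))(x) − 2·F(x)·(LF)(x)| ≤ 4·α12·‖ψ1‖_C²/N1 + 4·α21·‖ψ2‖_C²/N2, uniformly in x. -/

import Mathlib

open Finset

/-- The generator of the synchronization particle system: its action on a function
`f : ℝ^{N1} × ℝ^{N2} → ℝ` at a configuration `x`. -/
noncomputable def syncGenerator (v1 v2 α12 α21 : ℝ) (N1 N2 : ℕ)
    (f : (Fin N1 → ℝ) × (Fin N2 → ℝ) → ℝ)
    (x : (Fin N1 → ℝ) × (Fin N2 → ℝ)) : ℝ :=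
  v1 * ∑ i : Fin N1, fderiv ℝ f x (Pi.single i 1, 0) +
  v2 * ∑ j : Fin N2, fderiv ℝ f x (0, Pi.single j 1) +
  (α12 / N2) * ∑ i : Fin N1, ∑ j : Fin N2,
    (f (Function.update x.1 i (x.2 j), x.2) - f x) +
  (α21 / N1) * ∑ j : Fin N2, ∑ i : Fin N1,
    (f (x.1, Function.update x.2 j (x.1 i)) - f x)

/-- The empirical test functional `F(x) = (1/N1) Σ ψ1(x_i^{(1)}) + (1/N2) Σ ψ2(x_j^{(2)})`. -/
noncomputable def syncTestF (ψ1 ψ2 : ℝ → ℝ) (N1 N2 : ℕ)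
    (x : (Fin N1 → ℝ) × (Fin N2 → ℝ)) : ℝ :=
  (1 / N1) * ∑ i : Fin N1, ψ1 (x.1 i) + (1 / N2) * ∑ j : Fin N2, ψ2 (x.2 j)

/-- Uniform bound for the carré du champ:
`|L(F²)(x) − 2 F(x) LF(x)| ≤ 4 α12 ‖ψ1‖_C² / N1 + 4 α21 ‖ψ2‖_C² / N2`. -/
theorem stmt_18 (v1 v2 α12 α21 : ℝ) (h12 : 0 < α12) (h21 : 0 < α21)
    (N1 N2 : ℕ) (hN1 : 0 < N1) (hN2 : 0 < N2)
    (ψ1 ψ2 : ℝ → ℝ)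
    (hψ1 : ContDiff ℝ 1 ψ1) (hψ2 : ContDiff ℝ 1 ψ2)
    (hψ1b : ∃ C : ℝ, ∀ x : ℝ, |ψ1 x| ≤ C)
    (hψ2b : ∃ C : ℝ, ∀ x : ℝ, |ψ2 x| ≤ C)
    (hψ1db : ∃ C : ℝ, ∀ x : ℝ, |deriv ψ1 x| ≤ C)
    (hψ2db : ∃ C : ℝ, ∀ x : ℝ, |deriv ψ2 x| ≤ C) :
    ∀ x : (Fin N1 → ℝ) × (Fin N2 → ℝ),
      |syncGenerator v1 v2 α12 α21 N1 N2
          (fun y => (syncTestF ψ1 ψ2 N1 N2 y) ^ 2) x -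
        2 * syncTestF ψ1 ψ2 N1 N2 x *
          syncGenerator v1 v2 α12 α21 N1 N2 (syncTestF ψ1 ψ2 N1 N2) x| ≤
      4 * α12 * (⨆ y : ℝ, |ψ1 y|) ^ 2 / N1 +
      4 * α21 * (⨆ y : ℝ, |ψ2 y|) ^ 2 / N2 := by
  intro x
  set F := syncTestF ψ1 ψ2 N1 N2 with hFdef
  -- sup norms
  set M1 : ℝ := ⨆ y : ℝ, |ψ1 y| with hM1def
  set M2 : ℝ := ⨆ y : ℝ, |ψ2 y| with hM2def
  have hbdd1 : BddAbove (Set.range fun y : ℝ => |ψ1 y|) := by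
    obtain ⟨C, hC⟩ := hψ1b; exact ⟨C, by rintro z ⟨y, rfl⟩; exact hC y⟩
  have hbdd2 : BddAbove (Set.range fun y : ℝ => |ψ2 y|) := by
    obtain ⟨C, hC⟩ := hψ2b; exact ⟨C, by rintro z ⟨y, rfl⟩; exact hC y⟩
  have hM1 : ∀ y, |ψ1 y| ≤ M1 := fun y => le_ciSup hbdd1 y
  have hM2 : ∀ y, |ψ2 y| ≤ M2 := fun y => le_ciSup hbdd2 y
  have hM1nn : 0 ≤ M1 := le_trans (abs_nonneg _) (hM1 0)
  have hM2nn : 0 ≤ M2 := le_trans (abs_nonneg _) (hM2 0)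
  -- differentiability of F
  have hdF : Differentiable ℝ F := by
    have h1 : Differentiable ℝ ψ1 := hψ1.differentiable one_ne_zero
    have h2 : Differentiable ℝ ψ2 := hψ2.differentiable one_ne_zero
    rw [hFdef]; unfold syncTestF; fun_prop
  -- chain rule
  have hchain : ∀ v, fderiv ℝ (fun y => F y ^ 2) x v = 2 * F x * fderiv ℝ F x v := by
    intro v
    have h : (fun y => F y ^ 2) = fun y => F y * F y := by funext y; ring
    rw [h, fderiv_fun_mul (hdF x) (hdF x)]
    simp only [ContinuousLinearMap.add_apply, ContinuousLinearMap.smul_apply, smul_eq_mul]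
    ring
  -- the carré du champ identity
  have key : syncGenerator v1 v2 α12 α21 N1 N2 (fun y => F y ^ 2) x -
      2 * F x * syncGenerator v1 v2 α12 α21 N1 N2 F x =
      (α12 / N2) * ∑ i : Fin N1, ∑ j : Fin N2,
        (F (Function.update x.1 i (x.2 j), x.2) - F x) ^ 2 +
      (α21 / N1) * ∑ j : Fin N2, ∑ i : Fin N1,
        (F (x.1, Function.update x.2 j (x.1 i)) - F x) ^ 2 := by
    unfold syncGenerator
    have e1 : ∑ i : Fin N1, fderiv ℝ (fun y => F y ^ 2) x (Pi.single i 1, 0) =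
        2 * F x * ∑ i : Fin N1, fderiv ℝ F x (Pi.single i 1, 0) := by
      rw [Finset.mul_sum]; exact Finset.sum_congr rfl fun i _ => hchain _
    have e2 : ∑ j : Fin N2, fderiv ℝ (fun y => F y ^ 2) x (0, Pi.single j 1) =
        2 * F x * ∑ j : Fin N2, fderiv ℝ F x (0, Pi.single j 1) := by
      rw [Finset.mul_sum]; exact Finset.sum_congr rfl fun j _ => hchain _
    have e3 : ∑ i : Fin N1, ∑ j : Fin N2,
        (F (Function.update x.1 i (x.2 j), x.2) ^ 2 - F x ^ 2) =
        (∑ i : Fin N1, ∑ j : Fin N2,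
          (F (Function.update x.1 i (x.2 j), x.2) - F x) ^ 2) +
        2 * F x * ∑ i : Fin N1, ∑ j : Fin N2,
          (F (Function.update x.1 i (x.2 j), x.2) - F x) := by
      rw [Finset.mul_sum, ← Finset.sum_add_distrib]
      refine Finset.sum_congr rfl fun i _ => ?_
      rw [Finset.mul_sum, ← Finset.sum_add_distrib]
      exact Finset.sum_congr rfl fun j _ => by ring
    have e4 : ∑ j : Fin N2, ∑ i : Fin N1,
        (F (x.1, Function.update x.2 j (x.1 i)) ^ 2 - F x ^ 2) =
        (∑ j : Fin N2, ∑ i : Fin N1,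
          (F (x.1, Function.update x.2 j (x.1 i)) - F x) ^ 2) +
        2 * F x * ∑ j : Fin N2, ∑ i : Fin N1,
          (F (x.1, Function.update x.2 j (x.1 i)) - F x) := by
      rw [Finset.mul_sum, ← Finset.sum_add_distrib]
      refine Finset.sum_congr rfl fun j _ => ?_
      rw [Finset.mul_sum, ← Finset.sum_add_distrib]
      exact Finset.sum_congr rfl fun i _ => by ring
    simp only []
    rw [e1, e2, e3, e4]
    ring
  -- difference formulas
  have hd12 : ∀ (i : Fin N1) (j : Fin N2),
      F (Function.update x.1 i (x.2 j), x.2) - F x =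
      (1 / N1) * (ψ1 (x.2 j) - ψ1 (x.1 i)) := by
    intro i j
    rw [hFdef]; unfold syncTestF
    simp only
    have hupd : (fun k => ψ1 (Function.update x.1 i (x.2 j) k)) =
        Function.update (fun k => ψ1 (x.1 k)) i (ψ1 (x.2 j)) := by
      funext k
      rcases eq_or_ne k i with rfl | hk
      · simp
      · simp [Function.update_of_ne hk]
    have hsum : ∑ k : Fin N1, ψ1 (Function.update x.1 i (x.2 j) k) =
        ψ1 (x.2 j) + ((∑ k : Fin N1, ψ1 (x.1 k)) - ψ1 (x.1 i)) := by
      rw [hupd, Finset.sum_update_of_mem (Finset.mem_univ i)]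
      congr 1
      rw [Finset.sdiff_singleton_eq_erase, Finset.sum_erase_eq_sub (Finset.mem_univ i)]
    rw [hsum]; ring
  have hd21 : ∀ (j : Fin N2) (i : Fin N1),
      F (x.1, Function.update x.2 j (x.1 i)) - F x =
      (1 / N2) * (ψ2 (x.1 i) - ψ2 (x.2 j)) := by
    intro j i
    rw [hFdef]; unfold syncTestF
    simp only
    have hupd : (fun k => ψ2 (Function.update x.2 j (x.1 i) k)) =
        Function.update (fun k => ψ2 (x.2 k)) j (ψ2 (x.1 i)) := by
      funext k
      rcases eq_or_ne k j with rfl | hk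
      · simp
      · simp [Function.update_of_ne hk]
    have hsum : ∑ k : Fin N2, ψ2 (Function.update x.2 j (x.1 i) k) =
        ψ2 (x.1 i) + ((∑ k : Fin N2, ψ2 (x.2 k)) - ψ2 (x.2 j)) := by
      rw [hupd, Finset.sum_update_of_mem (Finset.mem_univ j)]
      congr 1
      rw [Finset.sdiff_singleton_eq_erase, Finset.sum_erase_eq_sub (Finset.mem_univ j)]
    rw [hsum]; ring
  -- pointwise square bounds
  have hsq12 : ∀ (i : Fin N1) (j : Fin N2),
      (F (Function.update x.1 i (x.2 j), x.2) - F x) ^ 2 ≤ 4 * M1 ^ 2 / (N1 : ℝ) ^ 2 := by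
    intro i j
    rw [hd12 i j, mul_pow]
    have habs : |ψ1 (x.2 j) - ψ1 (x.1 i)| ≤ 2 * M1 := by
      calc |ψ1 (x.2 j) - ψ1 (x.1 i)| ≤ |ψ1 (x.2 j)| + |ψ1 (x.1 i)| := abs_sub _ _
        _ ≤ M1 + M1 := add_le_add (hM1 _) (hM1 _)
        _ = 2 * M1 := by ring
    have hsq : (ψ1 (x.2 j) - ψ1 (x.1 i)) ^ 2 ≤ (2 * M1) ^ 2 := by
      rw [← sq_abs]
      exact pow_le_pow_left₀ (abs_nonneg _) habs 2
    have h1 : ((1:ℝ) / N1) ^ 2 * (ψ1 (x.2 j) - ψ1 (x.1 i)) ^ 2 ≤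
        ((1:ℝ) / N1) ^ 2 * (2 * M1) ^ 2 :=
      mul_le_mul_of_nonneg_left hsq (by positivity)
    refine h1.trans_eq ?_
    field_simp
    ring
  have hsq21 : ∀ (j : Fin N2) (i : Fin N1),
      (F (x.1, Function.update x.2 j (x.1 i)) - F x) ^ 2 ≤ 4 * M2 ^ 2 / (N2 : ℝ) ^ 2 := by
    intro j i
    rw [hd21 j i, mul_pow]
    have habs : |ψ2 (x.1 i) - ψ2 (x.2 j)| ≤ 2 * M2 := by
      calc |ψ2 (x.1 i) - ψ2 (x.2 j)| ≤ |ψ2 (x.1 i)| + |ψ2 (x.2 j)| := abs_sub _ _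
        _ ≤ M2 + M2 := add_le_add (hM2 _) (hM2 _)
        _ = 2 * M2 := by ring
    have hsq : (ψ2 (x.1 i) - ψ2 (x.2 j)) ^ 2 ≤ (2 * M2) ^ 2 := by
      rw [← sq_abs]
      exact pow_le_pow_left₀ (abs_nonneg _) habs 2
    have h1 : ((1:ℝ) / N2) ^ 2 * (ψ2 (x.1 i) - ψ2 (x.2 j)) ^ 2 ≤
        ((1:ℝ) / N2) ^ 2 * (2 * M2) ^ 2 :=
      mul_le_mul_of_nonneg_left hsq (by positivity)
    refine h1.trans_eq ?_
    field_simp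
    ring
  -- sum bounds
  have hN1' : (0:ℝ) < N1 := by exact_mod_cast hN1
  have hN2' : (0:ℝ) < N2 := by exact_mod_cast hN2
  have hS12 : ∑ i : Fin N1, ∑ j : Fin N2,
      (F (Function.update x.1 i (x.2 j), x.2) - F x) ^ 2 ≤
      (N1 : ℝ) * N2 * (4 * M1 ^ 2 / (N1 : ℝ) ^ 2) := by
    calc ∑ i : Fin N1, ∑ j : Fin N2, (F (Function.update x.1 i (x.2 j), x.2) - F x) ^ 2
        ≤ ∑ _i : Fin N1, ∑ _j : Fin N2, (4 * M1 ^ 2 / (N1 : ℝ) ^ 2) := by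
          refine Finset.sum_le_sum fun i _ => Finset.sum_le_sum fun j _ => hsq12 i j
      _ = (N1 : ℝ) * N2 * (4 * M1 ^ 2 / (N1 : ℝ) ^ 2) := by
          simp [Finset.sum_const]; ring
  have hS21 : ∑ j : Fin N2, ∑ i : Fin N1,
      (F (x.1, Function.update x.2 j (x.1 i)) - F x) ^ 2 ≤
      (N2 : ℝ) * N1 * (4 * M2 ^ 2 / (N2 : ℝ) ^ 2) := by
    calc ∑ j : Fin N2, ∑ i : Fin N1, (F (x.1, Function.update x.2 j (x.1 i)) - F x) ^ 2
        ≤ ∑ _j : Fin N2, ∑ _i : Fin N1, (4 * M2 ^ 2 / (N2 : ℝ) ^ 2) := by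
          refine Finset.sum_le_sum fun j _ => Finset.sum_le_sum fun i _ => hsq21 j i
      _ = (N2 : ℝ) * N1 * (4 * M2 ^ 2 / (N2 : ℝ) ^ 2) := by
          simp [Finset.sum_const]; ring
  have hsum12nn : 0 ≤ ∑ i : Fin N1, ∑ j : Fin N2,
      (F (Function.update x.1 i (x.2 j), x.2) - F x) ^ 2 :=
    Finset.sum_nonneg fun i _ => Finset.sum_nonneg fun j _ => sq_nonneg _
  have hsum21nn : 0 ≤ ∑ j : Fin N2, ∑ i : Fin N1,
      (F (x.1, Function.update x.2 j (x.1 i)) - F x) ^ 2 :=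
    Finset.sum_nonneg fun j _ => Finset.sum_nonneg fun i _ => sq_nonneg _
  rw [key, abs_of_nonneg (by positivity)]
  have b1 : (α12 / N2) * ∑ i : Fin N1, ∑ j : Fin N2,
      (F (Function.update x.1 i (x.2 j), x.2) - F x) ^ 2 ≤ 4 * α12 * M1 ^ 2 / N1 := by
    calc (α12 / N2) * ∑ i : Fin N1, ∑ j : Fin N2,
        (F (Function.update x.1 i (x.2 j), x.2) - F x) ^ 2
        ≤ (α12 / N2) * ((N1 : ℝ) * N2 * (4 * M1 ^ 2 / (N1 : ℝ) ^ 2)) :=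
          mul_le_mul_of_nonneg_left hS12 (by positivity)
      _ = 4 * α12 * M1 ^ 2 / N1 := by field_simp
  have b2 : (α21 / N1) * ∑ j : Fin N2, ∑ i : Fin N1,
      (F (x.1, Function.update x.2 j (x.1 i)) - F x) ^ 2 ≤ 4 * α21 * M2 ^ 2 / N2 := by
    calc (α21 / N1) * ∑ j : Fin N2, ∑ i : Fin N1,
        (F (x.1, Function.update x.2 j (x.1 i)) - F x) ^ 2
        ≤ (α21 / N1) * ((N2 : ℝ) * N1 * (4 * M2 ^ 2 / (N2 : ℝ) ^ 2)) :=
          mul_le_mul_of_nonneg_left hS21 (by positivity)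
      _ = 4 * α21 * M2 ^ 2 / N2 := by field_simp
  exact add_le_add b1 b2
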